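/- The Weyl-Lie derivative fails to commute with exterior differentiation exactly by the Faraday curvature: (L^D_ξ d)α := L^D_ξ(dα) − d^D(L^D_ξ α) = F^D ∧ ι_ξ α for any differential form α, where F^D is the curvature 2-form of D; in particular L^D_ξ commutes with d on functions. -/
import Mathlib


/-- model in the full exterior algebra of forms, trivializing `𝒱`: the
Weyl-Lie derivative fails to commute with exterior differentiation exactly by the Faraday
curvature: `(L^D_ξ d)α := L^D_ξ(dα) - d^D(L^D_ξ α) = F^D ∧ ι_ξ α` for any form `α`, where
`F^D = dω` is the curvature of `D`; in particular `L^D_ξ` commutes with `d` on functions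
(forms with `ι_ξ α = 0`).  Here `L^D_ξ` on forms is given by the Cartan-type formula
`L^D_ξ α = ι_ξ dα + d^D(ι_ξ α)` and `d^D β = dβ - ω ∧ β`. -/
theorem weyl_lie_commutator_with_d
    (Λ : Type*) [Ring Λ] [Algebra ℝ Λ]
    (d : Λ →ₗ[ℝ] Λ)          -- exterior derivative
    (ι : Λ →ₗ[ℝ] Λ)          -- interior product with ξ
    (ω : Λ)                   -- connection 1-form of D in the trivialization
    (hdd : ∀ α : Λ, d (d α) = 0)
    (hleib : ∀ α : Λ, d (ω * α) = d ω * α - ω * d α)   -- ω is a 1-form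
    (hωω : ∀ α : Λ, ω * (ω * α) = 0)
    (F : Λ) (hF : F = d ω)                             -- Faraday curvature
    (dD : Λ → Λ) (hdD : ∀ β : Λ, dD β = d β - ω * β)
    (LD : Λ → Λ) (hLD : ∀ α : Λ, LD α = ι (d α) + dD (ι α)) :
    (∀ α : Λ, LD (d α) - dD (LD α) = F * ι α) ∧
    (∀ α : Λ, ι α = 0 → LD (d α) = dD (LD α)) := by
  have key : ∀ α : Λ, LD (d α) - dD (LD α) = F * ι α := by
    intro α
    simp only [hLD, hdD, hF, hdd, map_zero, map_add, map_sub, hleib, mul_add, mul_sub, hωω]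
    abel
  exact ⟨key, fun α h => by have := key α; rw [h, mul_zero] at this; exact sub_eq_zero.mp this⟩
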